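/- arXiv:1606.06662 — 2 statements merged into one kernel-verified Lean document; each statement's English description precedes it below -/
import Mathlib

section
/- Enhanced lower bound: Let V be a real Hilbert space with inner product a, V₀ a closed subspace, u the solution of a(u,v)=L(v) for all v ∈ V₀, and u_H an approximation with u - u_H ∈ V₀. Let w ∈ V₀ and let e_G ∈ V_H (a finite-dimensional subspace of V₀) satisfy a(e_G, v) = −a(w, v) for all v ∈ V_H. If additionally a(u - u_H, v) = 0 for all v ∈ V_H (Galerkin orthogonality) and ‖w‖_a² > ‖e_G‖_a², then ‖u - u_H‖_a² ≥ (L(w) − a(u_H,w))² / (‖w‖_a² − ‖e_G‖_a²). -/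
open scoped RealInnerProductSpace

/-- Enhanced lower bound of the error (eq. (13) of the paper). -/
theorem stmt5 {V : Type*} [NormedAddCommGroup V] [InnerProductSpace ℝ V] [CompleteSpace V]
    (V₀ VH : Submodule ℝ V) (hVH : VH ≤ V₀) [FiniteDimensional ℝ VH]
    (L : V →L[ℝ] ℝ)
    (u : V) (hu : ∀ v ∈ V₀, ⟪u, v⟫ = L v)
    (uH : V) (huH : u - uH ∈ V₀)
    (w : V) (hw : w ∈ V₀)
    (eG : V) (heG : eG ∈ VH)
    (heGdef : ∀ v ∈ VH, ⟪eG, v⟫ = -⟪w, v⟫)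
    (hGal : ∀ v ∈ VH, ⟪u - uH, v⟫ = 0)
    (hdenom : ‖eG‖ ^ 2 < ‖w‖ ^ 2) :
    ‖u - uH‖ ^ 2 ≥ (L w - ⟪uH, w⟫) ^ 2 / (‖w‖ ^ 2 - ‖eG‖ ^ 2) := by
  have hweG : ⟪w, eG⟫ = -‖eG‖ ^ 2 := by
    have h := heGdef eG heG
    have hs : ⟪w, eG⟫ = ⟪eG, w⟫ := real_inner_comm _ _
    have h2 : ⟪eG, eG⟫ = ‖eG‖ ^ 2 := real_inner_self_eq_norm_sq eG
    linarith
  have hnorm : ‖w + eG‖ ^ 2 = ‖w‖ ^ 2 - ‖eG‖ ^ 2 := by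
    have := norm_add_sq_real w eG
    rw [hweG] at this
    linarith
  have hnum : L w - ⟪uH, w⟫ = ⟪u - uH, w + eG⟫ := by
    have h1 : ⟪u - uH, eG⟫ = 0 := hGal eG heG
    have h2 : ⟪u, w⟫ = L w := hu w hw
    have h3 := inner_sub_left (𝕜 := ℝ) u uH eG
    have h5 := inner_sub_left (𝕜 := ℝ) u uH (w + eG)
    have h6 := inner_add_right (𝕜 := ℝ) u w eG
    have h7 := inner_add_right (𝕜 := ℝ) uH w eG
    rw [h3] at h1
    linarith
  have hCS : (⟪u - uH, w + eG⟫) ^ 2 ≤ ‖u - uH‖ ^ 2 * ‖w + eG‖ ^ 2 := by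
    have := abs_real_inner_le_norm (u - uH) (w + eG)
    calc (⟪u - uH, w + eG⟫) ^ 2 = |⟪u - uH, w + eG⟫| ^ 2 := (sq_abs _).symm
      _ ≤ (‖u - uH‖ * ‖w + eG‖) ^ 2 := by
          apply pow_le_pow_left₀ (abs_nonneg _) this
      _ = ‖u - uH‖ ^ 2 * ‖w + eG‖ ^ 2 := by ring
  rw [ge_iff_le, div_le_iff₀ (by linarith)]
  rw [hnum, ← hnorm]
  linarith [hCS]
end

section
/- Lower bound for the combined error (β⁺_inf): In the setting where a = Σ_s a_s over subdomains (each a_s positive semidefinite), let e, ẽ ∈ V₀ satisfy the residual equations a(e, v) = R(v) and a(ẽ, v) = R̃(v) for all v ∈ V₀, and let κ > 0. Then for any z⁺ ∈ V₀ with Σ_s a_s(z⁺, z⁺) > 0, ‖κe + (1/κ)ẽ‖_a² ≥ (κ R(z⁺) + (1/κ) R̃(z⁺))² / (Σ_s a_s(z⁺, z⁺)). -/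
open scoped BigOperators

/-- Lower bound β⁺_inf of Corollary 1 for the combined error. -/
theorem stmt16 {V : Type*} [AddCommGroup V] [Module ℝ V] (N : ℕ)
    (a : Fin N → (V →ₗ[ℝ] V →ₗ[ℝ] ℝ))
    (hsymm : ∀ s x y, a s x y = a s y x)
    (hpsd : ∀ s v, 0 ≤ a s v v)
    (V₀ : Submodule ℝ V)
    (R Rt : V →ₗ[ℝ] ℝ)
    (e et : V)
    (he : ∀ v ∈ V₀, ∑ s, a s e v = R v)
    (het : ∀ v ∈ V₀, ∑ s, a s et v = Rt v)
    (κ : ℝ) (hκ : 0 < κ)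
    (z : V) (hz : z ∈ V₀) (hzpos : 0 < ∑ s, a s z z) :
    ∑ s, a s (κ • e + κ⁻¹ • et) (κ • e + κ⁻¹ • et) ≥
      (κ * R z + κ⁻¹ * Rt z) ^ 2 / (∑ s, a s z z) := by
  set b : V → V → ℝ := fun x y => ∑ s, a s x y with hb
  have bsymm : ∀ x y, b x y = b y x := fun x y =>
    Finset.sum_congr rfl fun s _ => hsymm s x y
  have bpsd : ∀ v, 0 ≤ b v v := fun v => Finset.sum_nonneg fun s _ => hpsd s v
  have badd1 : ∀ x y v, b (x + y) v = b x v + b y v := by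
    intro x y v; simp [hb, Finset.sum_add_distrib]
  have bsmul1 : ∀ (c : ℝ) x v, b (c • x) v = c * b x v := by
    intro c x v; simp [hb, Finset.mul_sum]
  have badd2 : ∀ v x y, b v (x + y) = b v x + b v y := by
    intro v x y; simp [hb, Finset.sum_add_distrib]
  have bsmul2 : ∀ (c : ℝ) v x, b v (c • x) = c * b v x := by
    intro c v x; simp [hb, Finset.mul_sum]
  set w : V := κ • e + κ⁻¹ • et with hw
  -- b w z = κ R z + κ⁻¹ Rt z
  have h1 : b e z = R z := he z hz
  have h2 : b et z = Rt z := het z hz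
  have hwz : b w z = κ * R z + κ⁻¹ * Rt z := by
    rw [hw, badd1, bsmul1, bsmul1, h1, h2]
  clear_value w
  -- Cauchy-Schwarz: (b w z)^2 ≤ b w w * b z z
  have hcs : (b w z) ^ 2 ≤ b w w * b z z := by
    have hzz : 0 < b z z := hzpos
    have key := bpsd (w + (-(b w z / b z z)) • z)
    have hexp : b (w + (-(b w z / b z z)) • z) (w + (-(b w z / b z z)) • z)
        = b w w - (b w z) ^ 2 / b z z := by
      simp only [badd1, badd2, bsmul1, bsmul2, bsymm z w]
      field_simp
      ring
    rw [hexp, sub_nonneg] at key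
    calc (b w z) ^ 2 = (b w z) ^ 2 / b z z * b z z := by field_simp
    _ ≤ b w w * b z z := by
        exact mul_le_mul_of_nonneg_right key hzz.le
  rw [← hwz, ge_iff_le, div_le_iff₀ hzpos]
  exact hcs
end
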